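/- If (Δ ⊣ Γ) : E → F is a geometric morphism of toposes and P is an internal chain-complete poset in E, then Γ(P) is an internal chain-complete poset in F. -/

import Mathlib

open CategoryTheory CategoryTheory.Limits

/-- An internal poset in a category `C`, presented by its (natural, local) order on
generalized elements `A ⟶ P`. -/
structure InternalPoset (C : Type*) [Category C] where
  P : C
  le : ∀ {A : C}, (A ⟶ P) → (A ⟶ P) → Prop
  le_refl : ∀ {A : C} (x : A ⟶ P), le x x
  le_trans : ∀ {A : C} (x y z : A ⟶ P), le x y → le y z → le x z
  le_antisymm : ∀ {A : C} (x y : A ⟶ P), le x y → le y x → x = y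
  le_stable : ∀ {A B : C} (h : B ⟶ A) (x y : A ⟶ P), le x y → le (h ≫ x) (h ≫ y)

namespace InternalPoset

variable {C : Type*} [Category C]

/-- `s` is a supremum of the family `S` of generalized elements at a given stage. -/
def IsSupFam (Pp : InternalPoset C) {A : C} (S : Set (A ⟶ Pp.P)) (s : A ⟶ Pp.P) : Prop :=
  (∀ x ∈ S, Pp.le x s) ∧ ∀ u, (∀ x ∈ S, Pp.le x u) → Pp.le s u

/-- A family of generalized elements is a chain when its members are pairwise comparable. -/
def IsChainFam (Pp : InternalPoset C) {A : C} (S : Set (A ⟶ Pp.P)) : Prop :=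
  ∀ x ∈ S, ∀ y ∈ S, Pp.le x y ∨ Pp.le y x

/-- `Pp` is (internally) chain-complete: every chain of generalized elements has a supremum,
stably under change of stage. -/
def ChainComplete (Pp : InternalPoset C) : Prop :=
  ∀ (A : C) (S : Set (A ⟶ Pp.P)), Pp.IsChainFam S →
    ∃ s, Pp.IsSupFam S s ∧
      ∀ (B : C) (h : B ⟶ A), Pp.IsSupFam ((fun x => h ≫ x) '' S) (h ≫ s)

/-- A morphism `f : P ⟶ P` is (internally) progressive: `x ≤ f(x)` for all generalized
elements `x`. -/
def Progressive (Pp : InternalPoset C) (f : Pp.P ⟶ Pp.P) : Prop :=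
  ∀ {A : C} (x : A ⟶ Pp.P), Pp.le x (x ≫ f)

end InternalPoset

/-- The Bourbaki–Witt principle holds in `C`: every internal progressive map on an internal
chain-complete poset has, internally, a fixed point (i.e. a fixed generalized element defined
on a cover of the terminal object). -/
def BWPrinciple (C : Type*) [Category C] [HasTerminal C] : Prop :=
  ∀ (Pp : InternalPoset C) (f : Pp.P ⟶ Pp.P),
    Pp.ChainComplete → Pp.Progressive f →
    ∃ (E : C) (e : E ⟶ ⊤_ C) (x : E ⟶ Pp.P), Epi e ∧ x ≫ f = x

/-- The direct image of an internal poset along a geometric morphism `(Δ ⊣ Γ)`: the object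
`Γ(P)` ordered via the adjunction transposition. -/
def gammaPoset {E F : Type*} [Category E] [Category F]
    (Γ : E ⥤ F) (Δ : F ⥤ E) (adj : Δ ⊣ Γ) (Pp : InternalPoset E) : InternalPoset F where
  P := Γ.obj Pp.P
  le {A} x y := Pp.le ((adj.homEquiv A Pp.P).symm x) ((adj.homEquiv A Pp.P).symm y)
  le_refl x := Pp.le_refl _
  le_trans x y z hxy hyz := Pp.le_trans _ _ _ hxy hyz
  le_antisymm x y h1 h2 := (adj.homEquiv _ Pp.P).symm.injective (Pp.le_antisymm _ _ h1 h2)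
  le_stable {A B} h x y hxy := by
    have := Pp.le_stable (Δ.map h) _ _ hxy
    simpa [Adjunction.homEquiv_naturality_left_symm] using this

/-- If `(Δ ⊣ Γ) : E → F` is a geometric morphism of toposes and `P` is an internal
chain-complete poset in `E`, then `Γ(P)` is an internal chain-complete poset in `F`. -/
theorem stmt18 {E F : Type*} [Category E] [Category F]
    [CategoryTheory.Limits.HasFiniteLimits E] [CategoryTheory.Limits.HasFiniteLimits F]
    (Γ : E ⥤ F) (Δ : F ⥤ E) (adj : Δ ⊣ Γ)
    [CategoryTheory.Limits.PreservesFiniteLimits Δ]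
    (Pp : InternalPoset E) (hcc : Pp.ChainComplete) :
    (gammaPoset Γ Δ adj Pp).ChainComplete := by
  intro A S hchain
  -- transpose the chain along the adjunction
  set e := adj.homEquiv A Pp.P with he
  set S' : Set (Δ.obj A ⟶ Pp.P) := (fun x => e.symm x) '' S with hS'
  have hchain' : Pp.IsChainFam S' := by
    rintro _ ⟨x, hx, rfl⟩ _ ⟨y, hy, rfl⟩
    exact hchain x hx y hy
  obtain ⟨s', ⟨hub, hlub⟩, hstab⟩ := hcc (Δ.obj A) S' hchain'
  refine ⟨e s', ⟨⟨?_, ?_⟩, ?_⟩⟩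
  · intro x hx
    show Pp.le (e.symm x) (e.symm (e s'))
    rw [e.symm_apply_apply]
    exact hub _ ⟨x, hx, rfl⟩
  · intro u hu
    show Pp.le (e.symm (e s')) (e.symm u)
    rw [e.symm_apply_apply]
    refine hlub _ ?_
    rintro _ ⟨x, hx, rfl⟩
    exact hu x hx
  · intro B h
    obtain ⟨hub2, hlub2⟩ := hstab (Δ.obj B) (Δ.map h)
    constructor
    · rintro _ ⟨x, hx, rfl⟩
      show Pp.le ((adj.homEquiv B Pp.P).symm (h ≫ x)) ((adj.homEquiv B Pp.P).symm (h ≫ e s'))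
      erw [Adjunction.homEquiv_naturality_left_symm, Adjunction.homEquiv_naturality_left_symm,
        e.symm_apply_apply]
      exact hub2 _ ⟨e.symm x, ⟨x, hx, rfl⟩, rfl⟩
    · intro u hu
      show Pp.le ((adj.homEquiv B Pp.P).symm (h ≫ e s')) ((adj.homEquiv B Pp.P).symm u)
      rw [Adjunction.homEquiv_naturality_left_symm, e.symm_apply_apply]
      refine hlub2 _ ?_
      rintro _ ⟨_, ⟨x, hx, rfl⟩, rfl⟩
      have := hu (h ≫ x) ⟨x, hx, rfl⟩
      show Pp.le (Δ.map h ≫ e.symm x) ((adj.homEquiv B Pp.P).symm u)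
      rw [← Adjunction.homEquiv_naturality_left_symm]
      exact this
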